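/- There exists a constant C > 0 such that for every integer n ≥ 2, ∑ over 4-tuples of positive integers (x₁,x₂,x₃,x₄) with x₁+x₂+x₃+x₄ = n and x₄+x₃ = x₂+x₁ of ∏_{i=1}^{4} x_i^(-5/7) ≤ C·n^(-6/7). -/

import Mathlib

open Real Finset

-- key step: (m+1)^{-5/7} ≤ (7/2)*((m+1)^{2/7} - m^{2/7})
lemma key (m : ℕ) : ((m:ℝ))^(2/7:ℝ) + (2/7) * ((m+1:ℕ):ℝ)^(-5/7:ℝ) ≤ ((m+1:ℕ):ℝ)^(2/7:ℝ) := by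
  set M : ℝ := ((m+1:ℕ):ℝ) with hM
  have hM1 : (1:ℝ) ≤ M := by push_cast [hM]; linarith [Nat.cast_nonneg (α := ℝ) m]
  have hMpos : (0:ℝ) < M := lt_of_lt_of_le one_pos hM1
  have hm : (m:ℝ) = M * (1 + (-1/M)) := by
    field_simp [hM]
    rw [hM]; push_cast; ring
  have hb : (1 + (-1/M)) ^ (2/7:ℝ) ≤ 1 + (2/7) * (-1/M) := by
    apply rpow_one_add_le_one_add_mul_self _ (by norm_num) (by norm_num)
    rw [neg_div, neg_le_neg_iff]
    exact div_le_one_of_le₀ hM1 hMpos.le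
  have h1 : ((m:ℝ))^(2/7:ℝ) = M^(2/7:ℝ) * (1 + (-1/M)) ^ (2/7:ℝ) := by
    rw [hm, mul_rpow hMpos.le (by nlinarith [div_le_one_of_le₀ hM1 hMpos.le] : (0:ℝ) ≤ 1 + (-1/M))]
  have h2 : M^(2/7:ℝ) * (1 + (2/7) * (-1/M)) = M^(2/7:ℝ) - (2/7) * M^(-5/7:ℝ) := by
    have : M^(2/7:ℝ) * (1/M) = M^(-5/7:ℝ) := by
      rw [one_div, ← rpow_neg_one M, ← rpow_add hMpos]; norm_num
    rw [mul_add, mul_one]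
    rw [show (2/7:ℝ) * (-1/M) = -((2/7) * (1/M)) by ring, mul_neg, ← mul_assoc,
      mul_comm (M^(2/7:ℝ)) (2/7:ℝ), mul_assoc, this, sub_eq_add_neg]
  have h3 : ((m:ℝ))^(2/7:ℝ) ≤ M^(2/7:ℝ) - (2/7) * M^(-5/7:ℝ) := by
    rw [h1, ← h2]
    exact mul_le_mul_of_nonneg_left hb (rpow_nonneg hMpos.le _)
  linarith

lemma sumA : ∀ m : ℕ, ∑ a ∈ Finset.range m, ((a+1:ℕ):ℝ)^(-5/7:ℝ) ≤ (7/2) * (m:ℝ)^(2/7:ℝ)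
  | 0 => by simp
  | (m+1) => by
    rw [Finset.sum_range_succ]
    have h1 := sumA m
    have h2 := key m
    linarith

-- Ico version
lemma sumA' (m : ℕ) : ∑ a ∈ Finset.Ico 1 m, ((a:ℕ):ℝ)^(-5/7:ℝ) ≤ (7/2) * (m:ℝ)^(2/7:ℝ) := by
  rcases Nat.eq_zero_or_pos m with rfl | hm
  · simp
  have : ∑ a ∈ Finset.Ico 1 m, ((a:ℕ):ℝ)^(-5/7:ℝ)
      = ∑ a ∈ Finset.range (m-1), ((a+1:ℕ):ℝ)^(-5/7:ℝ) := by
    rw [Finset.range_eq_Ico, Finset.sum_Ico_eq_sum_range]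
    simp [add_comm]
  rw [this]
  refine (sumA (m-1)).trans ?_
  have : ((m-1:ℕ):ℝ) ≤ (m:ℝ) := by exact_mod_cast Nat.sub_le m 1
  gcongr

lemma sumG (m : ℕ) (hm : 1 ≤ m) :
    ∑ a ∈ Finset.Ico 1 m, (a:ℝ)^(-5/7:ℝ) * (((m-a:ℕ)):ℝ)^(-5/7:ℝ) ≤ 14 * (m:ℝ)^(-3/7:ℝ) := by
  have hmpos : (0:ℝ) < m := by exact_mod_cast hm
  have hhalf : (0:ℝ) < (m:ℝ)/2 := by linarith
  have step1 : ∑ a ∈ Finset.Ico 1 m, (a:ℝ)^(-5/7:ℝ) * (((m-a:ℕ)):ℝ)^(-5/7:ℝ)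
      ≤ ∑ a ∈ Finset.Ico 1 m, ((m:ℝ)/2)^(-5/7:ℝ) * ((a:ℝ)^(-5/7:ℝ) + (((m-a:ℕ)):ℝ)^(-5/7:ℝ)) := by
    apply Finset.sum_le_sum
    intro a ha
    rw [Finset.mem_Ico] at ha
    obtain ⟨ha1, ha2⟩ := ha
    have hapos : (0:ℝ) < a := by exact_mod_cast ha1
    have hbpos : (0:ℝ) < ((m-a:ℕ):ℝ) := by
      have : 1 ≤ m - a := Nat.le_sub_of_add_le (by omega)
      exact_mod_cast this
    have hcast : ((m-a:ℕ):ℝ) = (m:ℝ) - a := by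
      push_cast [Nat.cast_sub ha2.le]; ring
    rcases le_or_gt (2*a) m with h | h
    · -- m - a ≥ m/2
      have : (m:ℝ)/2 ≤ ((m-a:ℕ):ℝ) := by
        rw [hcast]; have : (2*a:ℝ) ≤ m := by exact_mod_cast h
        linarith
      have hb : (((m-a:ℕ)):ℝ)^(-5/7:ℝ) ≤ ((m:ℝ)/2)^(-5/7:ℝ) :=
        Real.rpow_le_rpow_of_nonpos hhalf this (by norm_num)
      have := Real.rpow_nonneg hbpos.le (-5/7:ℝ)
      have := Real.rpow_nonneg hapos.le (-5/7:ℝ)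
      nlinarith
    · have : (m:ℝ)/2 ≤ (a:ℝ) := by
        have : (m:ℝ) ≤ 2*a := by exact_mod_cast h.le
        linarith
      have hb : ((a:ℕ):ℝ)^(-5/7:ℝ) ≤ ((m:ℝ)/2)^(-5/7:ℝ) :=
        Real.rpow_le_rpow_of_nonpos hhalf this (by norm_num)
      have := Real.rpow_nonneg hbpos.le (-5/7:ℝ)
      have := Real.rpow_nonneg hapos.le (-5/7:ℝ)
      nlinarith
  have refl : ∑ a ∈ Finset.Ico 1 m, (((m-a:ℕ)):ℝ)^(-5/7:ℝ)
      = ∑ a ∈ Finset.Ico 1 m, ((a:ℕ):ℝ)^(-5/7:ℝ) := by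
    have := Finset.sum_Ico_reflect (fun j => ((j:ℕ):ℝ)^(-5/7:ℝ)) 1 (m := m) (n := m) (Nat.le_succ m)
    simpa [Nat.succ_sub hm, Nat.sub_self, Nat.sub_add_cancel hm] using this
  have step2 : ∑ a ∈ Finset.Ico 1 m, ((m:ℝ)/2)^(-5/7:ℝ) * ((a:ℝ)^(-5/7:ℝ) + (((m-a:ℕ)):ℝ)^(-5/7:ℝ))
      ≤ ((m:ℝ)/2)^(-5/7:ℝ) * (7 * (m:ℝ)^(2/7:ℝ)) := by
    rw [← Finset.mul_sum, Finset.sum_add_distrib, refl]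
    have := sumA' m
    have h0 : (0:ℝ) ≤ ((m:ℝ)/2)^(-5/7:ℝ) := Real.rpow_nonneg hhalf.le _
    nlinarith
  have step3 : ((m:ℝ)/2)^(-5/7:ℝ) * (7 * (m:ℝ)^(2/7:ℝ)) ≤ 14 * (m:ℝ)^(-3/7:ℝ) := by
    have hsplit : ((m:ℝ)/2)^(-5/7:ℝ) = (m:ℝ)^(-5/7:ℝ) * ((2:ℝ))^(5/7:ℝ) := by
      rw [div_eq_mul_inv, Real.mul_rpow hmpos.le (by norm_num),
        Real.inv_rpow (by norm_num), show (-5/7:ℝ) = -(5/7) by norm_num,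
        Real.rpow_neg (by norm_num : (0:ℝ) ≤ 2), inv_inv]
    have h2 : ((2:ℝ))^(5/7:ℝ) ≤ 2 := by
      calc ((2:ℝ))^(5/7:ℝ) ≤ (2:ℝ)^(1:ℝ) :=
            Real.rpow_le_rpow_of_exponent_le (by norm_num) (by norm_num)
        _ = 2 := Real.rpow_one 2
    have hmul : (m:ℝ)^(-5/7:ℝ) * (m:ℝ)^(2/7:ℝ) = (m:ℝ)^(-3/7:ℝ) := by
      rw [← Real.rpow_add hmpos]; norm_num
    have h3 : (0:ℝ) ≤ (m:ℝ)^(-5/7:ℝ) := Real.rpow_nonneg hmpos.le _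
    have h4 : (0:ℝ) ≤ (m:ℝ)^(2/7:ℝ) := Real.rpow_nonneg hmpos.le _
    calc ((m:ℝ)/2)^(-5/7:ℝ) * (7 * (m:ℝ)^(2/7:ℝ))
        = ((2:ℝ))^(5/7:ℝ) * 7 * ((m:ℝ)^(-5/7:ℝ) * (m:ℝ)^(2/7:ℝ)) := by rw [hsplit]; ring
      _ = ((2:ℝ))^(5/7:ℝ) * 7 * (m:ℝ)^(-3/7:ℝ) := by rw [hmul]
      _ ≤ 14 * (m:ℝ)^(-3/7:ℝ) := by
          have h5 : (0:ℝ) ≤ (m:ℝ)^(-3/7:ℝ) := Real.rpow_nonneg hmpos.le _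
          nlinarith
  linarith [step1.trans step2, step3]

theorem stmt13 :
    ∃ C : ℝ, 0 < C ∧ ∀ n : ℕ, 2 ≤ n →
      (∑' p : {p : Fin 4 → ℕ // (∀ i, 0 < p i) ∧ p 0 + p 1 + p 2 + p 3 = n ∧
          p 3 + p 2 = p 1 + p 0},
        ∏ i, ((p : Fin 4 → ℕ) i : ℝ) ^ (-5/7 : ℝ)) ≤ C * (n : ℝ) ^ (-6/7 : ℝ) := by
  refine ⟨392, by norm_num, fun n hn => ?_⟩
  have hnpos : (0:ℝ) < (n:ℝ) := by exact_mod_cast (by omega : 0 < n)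
  have hrpos : (0:ℝ) < (n:ℝ)^(-6/7:ℝ) := Real.rpow_pos_of_pos hnpos _
  set S := {p : Fin 4 → ℕ // (∀ i, 0 < p i) ∧ p 0 + p 1 + p 2 + p 3 = n ∧
      p 3 + p 2 = p 1 + p 0} with hS
  have hfin : Finite S := by
    apply Finite.of_injective (fun p : S => fun i : Fin 4 =>
      (⟨p.1 i, by
        obtain ⟨hp, he, hq⟩ := p.2
        have h0 := hp 0; have h1 := hp 1; have h2 := hp 2; have h3 := hp 3
        fin_cases i <;> simp <;> omega⟩ : Fin (n+1)))
    intro p q h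
    ext i
    have := congrFun h i
    simpa using this
  rcases Nat.even_or_odd n with ⟨m, hm⟩ | hodd
  swap
  · -- odd case: empty
    have : IsEmpty S := by
      constructor
      rintro ⟨p, hp, he, hq⟩
      obtain ⟨k, hk⟩ := hodd
      omega
    rw [tsum_empty]
    positivity
  · -- even case
    have hm1 : 1 ≤ m := by omega
    have := Fintype.ofFinite S
    rw [tsum_fintype]
    set g : ℕ → ℝ := fun a => (a:ℝ)^(-5/7:ℝ) * (((m-a:ℕ)):ℝ)^(-5/7:ℝ) with hg
    set G : ℕ × ℕ → ℝ := fun q => g q.1 * g q.2 with hG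
    have hGnonneg : ∀ q : ℕ × ℕ, 0 ≤ G q := by
      intro q
      simp only [hG, hg]
      positivity
    have key1 : ∀ p : S, (∏ i, ((p.1 : Fin 4 → ℕ) i : ℝ) ^ (-5/7 : ℝ)) = G (p.1 0, p.1 2) := by
      rintro ⟨p, hp, he, hq⟩
      have h0 := hp 0; have h1 := hp 1; have h2 := hp 2; have h3 := hp 3
      have hp1 : p 1 = m - p 0 := by omega
      have hp3 : p 3 = m - p 2 := by omega
      simp only [hG, hg, Fin.prod_univ_four]
      rw [hp1, hp3]
      ring
    have himg : ∀ p : S, (p.1 0, p.1 2) ∈ Finset.Ico 1 m ×ˢ Finset.Ico 1 m := by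
      rintro ⟨p, hp, he, hq⟩
      have h0 := hp 0; have h1 := hp 1; have h2 := hp 2; have h3 := hp 3
      simp only [Finset.mem_product, Finset.mem_Ico]
      constructor <;> constructor <;> omega
    have hinj : ∀ p ∈ (Finset.univ : Finset S), ∀ q ∈ Finset.univ,
        (fun p : S => (p.1 0, p.1 2)) p = (fun p : S => (p.1 0, p.1 2)) q → p = q := by
      rintro ⟨p, hp, he, hq⟩ - ⟨r, hr, hre, hrq⟩ - h
      simp only [Prod.mk.injEq] at h
      obtain ⟨ha, hb⟩ := h
      have : p = r := by
        ext i
        fin_cases i <;> simp [ha, hb] <;> omega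
      subst this; rfl
    calc (∑ p : S, ∏ i, ((p.1 : Fin 4 → ℕ) i : ℝ) ^ (-5/7 : ℝ))
        = ∑ p : S, G (p.1 0, p.1 2) := Finset.sum_congr rfl (fun p _ => key1 p)
      _ = ∑ q ∈ (Finset.univ : Finset S).image (fun p : S => (p.1 0, p.1 2)), G q :=
          (Finset.sum_image hinj).symm
      _ ≤ ∑ q ∈ Finset.Ico 1 m ×ˢ Finset.Ico 1 m, G q := by
          apply Finset.sum_le_sum_of_subset_of_nonneg
          · intro q hq
            simp only [Finset.mem_image] at hq
            obtain ⟨p, -, rfl⟩ := hq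
            exact himg p
          · intro q _ _; exact hGnonneg q
      _ = (∑ a ∈ Finset.Ico 1 m, g a) * (∑ c ∈ Finset.Ico 1 m, g c) := by
          rw [Finset.sum_product, ← Finset.sum_mul_sum]
      _ ≤ (14 * (m:ℝ)^(-3/7:ℝ)) * (14 * (m:ℝ)^(-3/7:ℝ)) := by
          have h := sumG m hm1
          have hnn : 0 ≤ ∑ a ∈ Finset.Ico 1 m, g a :=
            Finset.sum_nonneg (fun a _ => by simp only [hg]; positivity)
          have h14 : (0:ℝ) ≤ 14 * (m:ℝ)^(-3/7:ℝ) := by positivity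
          exact mul_le_mul h h hnn h14
      _ ≤ 392 * (n:ℝ)^(-6/7:ℝ) := by
          have hmpos : (0:ℝ) < (m:ℝ) := by exact_mod_cast hm1
          have hmm : (m:ℝ)^(-3/7:ℝ) * (m:ℝ)^(-3/7:ℝ) = (m:ℝ)^(-6/7:ℝ) := by
            rw [← Real.rpow_add hmpos]; norm_num
          have hcast : (n:ℝ) = 2 * m := by rw [hm]; push_cast; ring
          have hmn : (m:ℝ)^(-6/7:ℝ) ≤ 2 * (n:ℝ)^(-6/7:ℝ) := by
            rw [hcast, Real.mul_rpow (by norm_num) hmpos.le]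
            have h2 : ((2:ℝ))^(-6/7:ℝ) * ((2:ℝ))^(6/7:ℝ) = 1 := by
              rw [← Real.rpow_add (by norm_num)]; norm_num
            have h26 : ((2:ℝ))^(6/7:ℝ) ≤ 2 := by
              calc ((2:ℝ))^(6/7:ℝ) ≤ (2:ℝ)^(1:ℝ) :=
                    Real.rpow_le_rpow_of_exponent_le (by norm_num) (by norm_num)
                _ = 2 := Real.rpow_one 2
            have hpos2 : (0:ℝ) < ((2:ℝ))^(-6/7:ℝ) := Real.rpow_pos_of_pos (by norm_num) _
            have hposm : (0:ℝ) < (m:ℝ)^(-6/7:ℝ) := Real.rpow_pos_of_pos hmpos _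
            have h3 : (1:ℝ) ≤ 2 * ((2:ℝ))^(-6/7:ℝ) := by nlinarith
            nlinarith [mul_le_mul_of_nonneg_right h3 hposm.le]
          nlinarith [Real.rpow_pos_of_pos hmpos (-6/7:ℝ)]
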